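/- arXiv:0810.5618 — 3 statements merged into one kernel-verified Lean document; each statement's English description precedes it below -/
import Mathlib

section
/- Let 𝔤 be a linear subspace of 𝔰𝔬(N) satisfying condition (C1). Then for every endomorphism a of V and every nonzero u ∈ V*, if the V-valued alternating bilinear map u ∧ a (i.e. (x,y) ↦ u(x)a(y) − u(y)a(x)) lies in 𝔤², then there exist b ∈ 𝔤 and w ∈ V such that a = b + u ⊗ w, where u ⊗ w denotes the endomorphism x ↦ u(x)·w. -/
open scoped RealInnerProductSpace

noncomputable section

abbrev V (N : ℕ) := EuclideanSpace ℝ (Fin N)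

/-- An endomorphism is skew-symmetric (i.e. belongs to `𝔰𝔬(N)`). -/
def skew {N : ℕ} (A : Module.End ℝ (V N)) : Prop :=
  ∀ x y : V N, ⟪A x, y⟫ = - ⟪x, A y⟫

/-- Orthogonal projection of `V N` onto the orthogonal complement of `v`. -/
def pv {N : ℕ} (v : V N) : Module.End ℝ (V N) :=
  (Submodule.span ℝ {v})ᗮ.subtype ∘ₗ
    (Submodule.orthogonalProjectionOnto (Submodule.span ℝ {v})ᗮ).toLinearMap

/-- Condition (C1): for every nonzero `v`, the map `A ↦ p_v ∘ A ∘ p_v` is injective on `𝔤`. -/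
def C1 {N : ℕ} (g : Set (Module.End ℝ (V N))) : Prop :=
  ∀ v : V N, v ≠ 0 → Set.InjOn (fun A => pv v ∘ₗ A ∘ₗ pv v) g

/-- `u ∧ B`: the `V`-valued alternating bilinear map `(x, y) ↦ u(x)•B(y) − u(y)•B(x)`. -/
def wedgeE {N : ℕ} (u : V N →ₗ[ℝ] ℝ) (B : Module.End ℝ (V N)) :
    V N →ₗ[ℝ] V N →ₗ[ℝ] V N :=
  u.smulRight B - (u.smulRight B).flip

/-- `𝔤²`: the span of the maps `u ∧ B` for `u ∈ V*` and `B ∈ 𝔤`. -/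
def gsq {N : ℕ} (g : Set (Module.End ℝ (V N))) :
    Submodule ℝ (V N →ₗ[ℝ] V N →ₗ[ℝ] V N) :=
  Submodule.span ℝ {C | ∃ (u : V N →ₗ[ℝ] ℝ) (B : Module.End ℝ (V N)), B ∈ g ∧ C = wedgeE u B}

/-- If `𝔤 ⊆ 𝔰𝔬(N)` satisfies (C1), `a ∈ End(V)`, `u ∈ V* \ {0}` and `u ∧ a ∈ 𝔤²`, then
`a = b + u ⊗ w` for some `b ∈ 𝔤` and `w ∈ V`. -/
theorem statement2 (N : ℕ) (hN : 1 ≤ N) (g : Submodule ℝ (Module.End ℝ (V N)))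
    (hso : ∀ A ∈ g, skew A) (hC1 : C1 (g : Set (Module.End ℝ (V N))))
    (a : Module.End ℝ (V N)) (u : V N →ₗ[ℝ] ℝ) (hu : u ≠ 0)
    (h : wedgeE u a ∈ gsq (g : Set (Module.End ℝ (V N)))) :
    ∃ b ∈ g, ∃ w : V N, a = b + u.smulRight w := by
  -- Step 0: extract a linear family `C : V → g` with `wedgeE u a y z = C y z - C z y`.
  obtain ⟨C, hCg, hC⟩ : ∃ C : V N →ₗ[ℝ] Module.End ℝ (V N),
      (∀ z, C z ∈ g) ∧ ∀ y z, wedgeE u a y z = C y z - C z y := by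
    refine Submodule.span_induction ?_ ?_ ?_ ?_ h
    · rintro T ⟨u', B, hB, rfl⟩
      refine ⟨u'.smulRight B, fun z => g.smul_mem _ hB, fun y z => ?_⟩
      simp [wedgeE]
    · exact ⟨0, fun z => g.zero_mem, fun y z => by simp [wedgeE]⟩
    · rintro T₁ T₂ - - ⟨C₁, h₁g, h₁⟩ ⟨C₂, h₂g, h₂⟩
      refine ⟨C₁ + C₂, fun z => g.add_mem (h₁g z) (h₂g z), fun y z => ?_⟩
      simp only [LinearMap.add_apply, h₁, h₂]
      abel
    · rintro r T - ⟨C₁, h₁g, h₁⟩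
      refine ⟨r • C₁, fun z => g.smul_mem r (h₁g z), fun y z => ?_⟩
      simp only [LinearMap.smul_apply, h₁, smul_sub]
  have hw : ∀ y z, wedgeE u a y z = u y • a z - u z • a y := by
    intro y z; simp [wedgeE]
  -- Riesz representative of `u`.
  set n : V N := (InnerProductSpace.toDual ℝ (V N)).symm
      (LinearMap.toContinuousLinearMap u) with hndef
  have hun : ∀ x : V N, u x = ⟪n, x⟫ := by
    intro x
    rw [hndef, InnerProductSpace.toDual_symm_apply]
    rfl
  have hn0 : n ≠ 0 := by
    intro h0
    apply hu
    ext x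
    simp [hun x, h0]
  have hker : ∀ x : V N, x ∈ (Submodule.span ℝ {n})ᗮ ↔ u x = 0 := by
    intro x
    rw [show Submodule.span ℝ {n} = (ℝ ∙ n) from rfl,
      Submodule.mem_orthogonal_singleton_iff_inner_right, ← hun]
  -- symmetry of C on ker u
  have hsym : ∀ y z, u y = 0 → u z = 0 → C y z = C z y := by
    intro y z hy hz
    have := (hC y z).symm.trans (hw y z)
    rw [hy, hz, zero_smul, zero_smul, sub_zero] at this
    exact sub_eq_zero.mp this
  have hskew : ∀ z, skew (C z) := fun z => hso _ (hCg z)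
  -- orthogonality
  have horth : ∀ y z w, u y = 0 → u z = 0 → u w = 0 → ⟪C y z, w⟫ = 0 := by
    intro y z w hy hz hw'
    have e1 : ⟪C y z, w⟫ = -⟪y, C z w⟫ := by rw [hsym y z hy hz]; exact hskew z y w
    have c1 : ⟪y, C z w⟫ = ⟪C z w, y⟫ := real_inner_comm _ _
    have e2 : ⟪C z w, y⟫ = -⟪z, C w y⟫ := by rw [hsym z w hz hw']; exact hskew w z y
    have c2 : ⟪z, C w y⟫ = ⟪C w y, z⟫ := real_inner_comm _ _
    have e3 : ⟪C w y, z⟫ = -⟪w, C y z⟫ := by rw [hsym w y hw' hy]; exact hskew y w z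
    have c3 : ⟪w, C y z⟫ = ⟪C y z, w⟫ := real_inner_comm _ _
    linarith
  -- C vanishes on ker u
  have hCzero : ∀ y, u y = 0 → C y = 0 := by
    intro y hy
    refine hC1 n hn0 (hCg y) g.zero_mem ?_
    have : pv n ∘ₗ C y ∘ₗ pv n = 0 := by
      apply LinearMap.ext
      intro x
      have hzmem : pv n x ∈ (Submodule.span ℝ {n})ᗮ := by
        simp only [pv, LinearMap.comp_apply]
        exact SetLike.coe_mem _
      have hz : u (pv n x) = 0 := (hker _).mp hzmem
      have hmem : C y (pv n x) ∈ ((Submodule.span ℝ {n})ᗮ)ᗮ := by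
        rw [Submodule.mem_orthogonal]
        intro w hwmem
        rw [real_inner_comm]
        exact horth y (pv n x) w hy hz ((hker w).mp hwmem)
      show pv n (C y (pv n x)) = 0
      simp only [pv, LinearMap.comp_apply, ContinuousLinearMap.coe_coe,
        Submodule.coe_subtype] at hmem ⊢
      rw [Submodule.orthogonalProjectionOnto_apply_of_mem_orthogonal hmem]
      simp
    simp only [this]
    simp
  -- pick x with u x = 1
  obtain ⟨x₀, hx₀⟩ : ∃ x₀, u x₀ ≠ 0 := by
    by_contra hcon
    push_neg at hcon
    exact hu (LinearMap.ext fun x => by simp [hcon x])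
  set x : V N := (u x₀)⁻¹ • x₀ with hxdef
  have hx1 : u x = 1 := by
    rw [hxdef, map_smul, smul_eq_mul, inv_mul_cancel₀ hx₀]
  refine ⟨C x, hCg x, a x - C x x, ?_⟩
  refine LinearMap.ext fun z => ?_
  have h2 : C z = u z • C x := by
    have h3 := hCzero (z - u z • x) (by rw [map_sub, map_smul, hx1, smul_eq_mul, mul_one, sub_self])
    rw [map_sub, map_smul, sub_eq_zero] at h3
    exact h3
  have h1 := (hC x z).symm.trans (hw x z)
  rw [hx1, one_smul, h2, LinearMap.smul_apply] at h1
  show a z = C x z + (u.smulRight (a x - C x x)) z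
  rw [LinearMap.smulRight_apply]
  linear_combination (norm := module) -h1
end
end

section
/- Let 𝔤 be a linear subspace of 𝔰𝔬(N) satisfying condition (C1). Let P¹ be the orthogonal complement of 𝔤 in End(V) (with respect to the inner product induced by the standard inner product on V), and let P² be the orthogonal complement of 𝔤² in the space of alternating bilinear maps V × V → V (with its induced inner product). Then for every nonzero u ∈ V* and every a ∈ P¹ such that the orthogonal projection of u ∧ a onto P² vanishes, there exists w ∈ V such that a equals the orthogonal projection of u ⊗ w onto P¹. (That is, the symbol sequence V → P¹ → P² of the deformation complex is exact at P¹.) -/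
open scoped RealInnerProductSpace

noncomputable section

/-- The standard basis vector `eᵢ` of `V N`. -/
def stdb {N : ℕ} (i : Fin N) : V N := EuclideanSpace.single i 1

/-- The inner product on `End(V)` induced by the standard inner product on `V`. -/
def innerEnd {N : ℕ} (A B : Module.End ℝ (V N)) : ℝ :=
  ∑ i : Fin N, ⟪A (stdb i), B (stdb i)⟫

/-- The inner product on bilinear maps `V × V → V` induced by the standard inner product. -/
def innerBil {N : ℕ} (B C : V N →ₗ[ℝ] V N →ₗ[ℝ] V N) : ℝ :=
  ∑ i : Fin N, ∑ j : Fin N, ⟪B (stdb i) (stdb j), C (stdb i) (stdb j)⟫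

/-- `P¹`: the orthogonal complement of `𝔤` in `End(V)`. -/
def P1 {N : ℕ} (g : Set (Module.End ℝ (V N))) : Set (Module.End ℝ (V N)) :=
  {a | ∀ b ∈ g, innerEnd a b = 0}

/-- `P²`: the orthogonal complement of `𝔤²` in the space of alternating bilinear maps
`V × V → V`. -/
def P2 {N : ℕ} (g : Set (Module.End ℝ (V N))) : Set (V N →ₗ[ℝ] V N →ₗ[ℝ] V N) :=
  {B | (∀ x y : V N, B x y = - B y x) ∧ ∀ C ∈ gsq g, innerBil B C = 0}

/-- `p` is the orthogonal projection of `x` onto the subspace `S` (w.r.t. the inner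
product `ip`): `p ∈ S` and `x − p` is orthogonal to `S`. -/
def IsOrthProjOn {M : Type*} [AddCommGroup M] (ip : M → M → ℝ) (S : Set M) (x p : M) :
    Prop :=
  p ∈ S ∧ ∀ s ∈ S, ip (x - p) s = 0


/-! ### Auxiliary lemmas -/

section Aux

variable {N : ℕ}

lemma innerV_eq (x y : V N) : ⟪x, y⟫ = ∑ k : Fin N, x k * y k := by
  simp [PiLp.inner_apply, RCLike.inner_apply, mul_comm]

/-- Transfer of trilinear maps to Euclidean space. -/
def Tmap (N : ℕ) : (V N →ₗ[ℝ] V N →ₗ[ℝ] V N) →ₗ[ℝ]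
    EuclideanSpace ℝ (Fin N × Fin N × Fin N) where
  toFun B := WithLp.toLp 2 fun p : Fin N × Fin N × Fin N => B (stdb p.1) (stdb p.2.1) p.2.2
  map_add' B C := rfl
  map_smul' c B := rfl

lemma Tmap_inner (B C : V N →ₗ[ℝ] V N →ₗ[ℝ] V N) :
    ⟪Tmap N B, Tmap N C⟫ = innerBil B C := by
  unfold innerBil
  rw [PiLp.inner_apply, Fintype.sum_prod_type]
  refine Finset.sum_congr rfl fun i _ => ?_
  rw [Fintype.sum_prod_type]
  refine Finset.sum_congr rfl fun j _ => ?_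
  rw [innerV_eq]
  refine Finset.sum_congr rfl fun k _ => ?_
  simp [Tmap, RCLike.inner_apply, LinearMap.coe_mk, AddHom.coe_mk, mul_comm]
  rfl

lemma Tmap_zero (B : V N →ₗ[ℝ] V N →ₗ[ℝ] V N) (hB : Tmap N B = 0) : B = 0 := by
  apply Module.Basis.ext (EuclideanSpace.basisFun (Fin N) ℝ).toBasis
  intro i
  apply Module.Basis.ext (EuclideanSpace.basisFun (Fin N) ℝ).toBasis
  intro j
  have hb : ∀ i : Fin N, ((EuclideanSpace.basisFun (Fin N) ℝ).toBasis : Module.Basis (Fin N) ℝ (V N)) i = stdb i := by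
    intro i
    simp [stdb, EuclideanSpace.basisFun_apply]
  rw [hb, hb]
  have : ∀ k : Fin N, B (stdb i) (stdb j) k = 0 := by
    intro k
    have := congrArg (fun f : EuclideanSpace ℝ (Fin N × Fin N × Fin N) => f (i, j, k)) hB
    exact this
  ext k
  simpa using this k

lemma Tmap_inj : Function.Injective (Tmap N) := by
  intro B C h
  have := Tmap_zero (B - C) (by rw [map_sub, h, sub_self])
  exact sub_eq_zero.1 this

/-- The submodule of alternating bilinear maps. -/
def altS (N : ℕ) : Submodule ℝ (V N →ₗ[ℝ] V N →ₗ[ℝ] V N) where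
  carrier := {B | ∀ x y : V N, B x y = - B y x}
  add_mem' := by
    intro B C hB hC x y
    simp only [LinearMap.add_apply, hB x y, hC x y, neg_add]
  zero_mem' := by intro x y; simp
  smul_mem' := by
    intro c B hB x y
    simp only [LinearMap.smul_apply, hB x y, smul_neg]

lemma orth_lemma {E : Type*} [NormedAddCommGroup E] [InnerProductSpace ℝ E]
    [FiniteDimensional ℝ E] (K W : Submodule ℝ E) (hKW : K ≤ W) {b : E} (hb : b ∈ W)
    (ho : ∀ c, c ∈ W → c ∈ Kᗮ → ⟪b, c⟫ = 0) : b ∈ K := by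
  rw [← Submodule.orthogonal_orthogonal K, Submodule.mem_orthogonal]
  intro c hc
  set c₁ : E := ((Submodule.orthogonalProjectionOnto W c : W) : E) with hc₁def
  have hc₂ : c - c₁ ∈ Wᗮ := Submodule.sub_starProjection_mem_orthogonal (K := W) c
  have hc₁W : c₁ ∈ W := (Submodule.orthogonalProjectionOnto W c).2
  have hc₁K : c₁ ∈ Kᗮ := by
    have h2 : c - c₁ ∈ Kᗮ := Submodule.orthogonal_le hKW hc₂
    have h3 := Kᗮ.sub_mem hc h2
    simpa using h3
  have h1 : ⟪b, c₁⟫ = 0 := ho c₁ hc₁W hc₁K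
  have h2 : ⟪b, c - c₁⟫ = 0 := (Submodule.mem_orthogonal W _).1 hc₂ b hb
  rw [inner_sub_right] at h2
  rw [real_inner_comm]
  linarith

lemma gsq_le_altS (g : Set (Module.End ℝ (V N))) : gsq g ≤ altS N := by
  rw [gsq, Submodule.span_le]
  rintro C ⟨u, B, _, rfl⟩
  intro x y
  simp only [wedgeE, LinearMap.sub_apply, LinearMap.smulRight_apply, LinearMap.flip_apply]
  abel

lemma gsq_rep {g : Submodule ℝ (Module.End ℝ (V N))} {C : V N →ₗ[ℝ] V N →ₗ[ℝ] V N}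
    (hC : C ∈ gsq (g : Set (Module.End ℝ (V N)))) :
    ∃ φ : V N →ₗ[ℝ] Module.End ℝ (V N), (∀ x, φ x ∈ g) ∧ C = φ - φ.flip := by
  refine Submodule.span_induction ?_ ?_ ?_ ?_ hC
  · rintro x ⟨u, B, hB, rfl⟩
    exact ⟨u.smulRight B, fun x => by simpa using g.smul_mem (u x) hB, rfl⟩
  · exact ⟨0, fun x => by simp [g.zero_mem], by ext x y; simp⟩
  · rintro x y - - ⟨φ, hφ, rfl⟩ ⟨ψ, hψ, rfl⟩
    exact ⟨φ + ψ, fun x => g.add_mem (hφ x) (hψ x), by ext x y; simp; abel⟩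
  · rintro c x - ⟨φ, hφ, rfl⟩
    exact ⟨c • φ, fun x => g.smul_mem c (hφ x), by ext x y; simp [mul_sub]⟩

end Aux

/-- Exactness of the symbol sequence `V → P¹ → P²` at `P¹`: if `𝔤 ⊆ 𝔰𝔬(N)` satisfies (C1),
`u ≠ 0`, `a ∈ P¹` and the orthogonal projection of `u ∧ a` onto `P²` vanishes, then `a` is
the orthogonal projection of `u ⊗ w` onto `P¹` for some `w ∈ V`. -/
theorem statement3 (N : ℕ) (hN : 1 ≤ N) (g : Submodule ℝ (Module.End ℝ (V N)))
    (hso : ∀ A ∈ g, skew A) (hC1 : C1 (g : Set (Module.End ℝ (V N))))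
    (u : V N →ₗ[ℝ] ℝ) (hu : u ≠ 0) (a : Module.End ℝ (V N))
    (ha : a ∈ P1 (g : Set (Module.End ℝ (V N))))
    (h : IsOrthProjOn innerBil (P2 (g : Set (Module.End ℝ (V N)))) (wedgeE u a) 0) :
    ∃ w : V N, IsOrthProjOn innerEnd (P1 (g : Set (Module.End ℝ (V N)))) (u.smulRight w) a := by
  -- Step 0: unpack the projection hypothesis
  obtain ⟨-, horth⟩ := h
  -- Step 1: `wedgeE u a ∈ gsq g`
  have hwa_alt : wedgeE u a ∈ altS N := by
    intro x y
    simp only [wedgeE, LinearMap.sub_apply, LinearMap.smulRight_apply, LinearMap.flip_apply]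
    abel
  have hmem : wedgeE u a ∈ gsq (g : Set (Module.End ℝ (V N))) := by
    have key : Tmap N (wedgeE u a) ∈ (gsq (g : Set (Module.End ℝ (V N)))).map (Tmap N) := by
      apply orth_lemma _ ((altS N).map (Tmap N))
        (Submodule.map_mono (gsq_le_altS _))
      · exact ⟨wedgeE u a, hwa_alt, rfl⟩
      · rintro c ⟨C, hCalt, rfl⟩ hcK
        rw [Tmap_inner]
        have hCP2 : C ∈ P2 (g : Set (Module.End ℝ (V N))) := by
          refine ⟨hCalt, fun D hD => ?_⟩
          have : (⟪Tmap N D, Tmap N C⟫ : ℝ) = 0 :=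
            (Submodule.mem_orthogonal _ _).1 hcK _ ⟨D, hD, rfl⟩
          rw [Tmap_inner] at this
          rw [innerBil] at this ⊢
          rw [← this]
          refine Finset.sum_congr rfl fun i _ => Finset.sum_congr rfl fun j _ => ?_
          rw [real_inner_comm]
        have := horth C hCP2
        rwa [sub_zero] at this
    obtain ⟨D, hD, hDeq⟩ := key
    rwa [← Tmap_inj hDeq]
  -- Step 2: representation
  obtain ⟨φ, hφ, hrep⟩ := gsq_rep hmem
  have hEq : ∀ x y : V N, u x • a y - u y • a x = φ x y - φ y x := by
    intro x y
    have h1 := congrArg (fun F : V N →ₗ[ℝ] V N →ₗ[ℝ] V N => F x y) hrep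
    simpa [wedgeE, LinearMap.sub_apply, LinearMap.smulRight_apply, LinearMap.flip_apply]
      using h1
  -- Step 3: choose v with u v = 1
  obtain ⟨v₀, hv₀⟩ : ∃ x, u x ≠ 0 := by
    by_contra hcon
    push_neg at hcon
    exact hu (LinearMap.ext fun x => by simpa using hcon x)
  set v : V N := (u v₀)⁻¹ • v₀ with hvdef
  have huv : u v = 1 := by
    rw [hvdef, map_smul, smul_eq_mul, inv_mul_cancel₀ hv₀]
  -- Step 4: symmetry on ker u
  have hsym : ∀ x y : V N, u x = 0 → u y = 0 → φ x y = φ y x := by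
    intro x y hx hy
    have := hEq x y
    rw [hx, hy] at this
    simp only [zero_smul, sub_zero, sub_self] at this
    exact sub_eq_zero.1 this.symm
  -- Step 5: triple vanishing
  have hT : ∀ x y z : V N, u x = 0 → u y = 0 → u z = 0 → ⟪φ x y, z⟫ = 0 := by
    intro x y z hx hy hz
    have e : ⟪φ x y, z⟫ = -⟪φ x y, z⟫ := by
      calc ⟪φ x y, z⟫ = ⟪φ y x, z⟫ := by rw [hsym x y hx hy]
        _ = -⟪x, φ y z⟫ := hso _ (hφ y) x z
        _ = -⟪φ y z, x⟫ := by rw [real_inner_comm]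
        _ = -⟪φ z y, x⟫ := by rw [hsym y z hy hz]
        _ = ⟪y, φ z x⟫ := by rw [hso _ (hφ z) y x, neg_neg]
        _ = ⟪φ z x, y⟫ := by rw [real_inner_comm]
        _ = ⟪φ x z, y⟫ := by rw [hsym z x hz hx]
        _ = -⟪z, φ x y⟫ := hso _ (hφ x) z y
        _ = -⟪φ x y, z⟫ := by rw [real_inner_comm]
    linarith
  -- Step 6: Riesz vector
  set n : V N := (InnerProductSpace.toDual ℝ (V N)).symm (LinearMap.toContinuousLinearMap u)
    with hndef
  have hnx : ∀ x : V N, ⟪n, x⟫ = u x := by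
    intro x
    rw [hndef]
    exact InnerProductSpace.toDual_symm_apply
  have hn : n ≠ 0 := by
    intro h0
    apply hu
    ext x
    have := hnx x
    rw [h0] at this
    simpa using this.symm
  have hmemS : ∀ x : V N, x ∈ (Submodule.span ℝ {n})ᗮ ↔ u x = 0 := by
    intro x
    rw [Submodule.mem_orthogonal_singleton_iff_inner_left, real_inner_comm, hnx]
  -- Step 7: φ vanishes on ker u
  have hker : ∀ x : V N, u x = 0 → φ x = 0 := by
    intro x hx
    have heq : pv n ∘ₗ φ x ∘ₗ pv n = pv n ∘ₗ (0 : Module.End ℝ (V N)) ∘ₗ pv n := by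
      apply LinearMap.ext
      intro y
      simp only [LinearMap.comp_apply, LinearMap.zero_apply, map_zero, pv,
        ContinuousLinearMap.coe_coe, Submodule.coe_subtype]
      set y' : V N := ((Submodule.orthogonalProjectionOnto (Submodule.span ℝ {n})ᗮ y :
        (Submodule.span ℝ {n})ᗮ) : V N) with hy'def
      have hy' : u y' = 0 := (hmemS y').1 (Submodule.orthogonalProjectionOnto (Submodule.span ℝ {n})ᗮ y).2
      have hw : φ x y' ∈ ((Submodule.span ℝ {n})ᗮ)ᗮ := by
        rw [Submodule.mem_orthogonal']
        intro z hz
        exact hT x y' z hx hy' ((hmemS z).1 hz)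
      rw [Submodule.orthogonalProjectionOnto_apply_of_mem_orthogonal hw]
      simp
    exact hC1 n hn (hφ x) g.zero_mem heq
  -- Step 8: φ y = u y • φ v
  have hφall : ∀ y : V N, φ y = u y • φ v := by
    intro y
    have hp : u (y - u y • v) = 0 := by
      rw [map_sub, map_smul, smul_eq_mul, huv, mul_one, sub_self]
    have := hker _ hp
    rw [map_sub, map_smul] at this
    exact sub_eq_zero.1 this
  -- Step 9: conclusion
  refine ⟨a v - φ v v, ha, ?_⟩
  have hfin : u.smulRight (a v - φ v v) - a = -(φ v) := by
    apply LinearMap.ext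
    intro y
    have h1 := hEq v y
    rw [huv, one_smul] at h1
    have h2 : φ y v = u y • (φ v v) := by rw [hφall y]; rfl
    rw [h2] at h1
    simp only [LinearMap.sub_apply, LinearMap.smulRight_apply, LinearMap.neg_apply]
    have : a y = u y • a v + φ v y - u y • φ v v := by
      have := sub_eq_sub_iff_sub_eq_sub.1 h1
      linear_combination (norm := module) h1
    rw [this, smul_sub]
    abel
  intro s hs
  rw [hfin]
  have h1 : innerEnd (-(φ v)) s = - innerEnd s (φ v) := by
    unfold innerEnd
    rw [← Finset.sum_neg_distrib]
    refine Finset.sum_congr rfl fun i _ => ?_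
    rw [LinearMap.neg_apply, inner_neg_left, real_inner_comm]
  rw [h1, hs _ (hφ v), neg_zero]
end
end

section
/- For every linear subspace 𝔤 of 𝔰𝔬(N), the subspace 𝔤² of the space of alternating bilinear maps V × V → V has dimension N·(dim 𝔤). -/
open scoped RealInnerProductSpace

noncomputable section

/-- The key linear map `T ↦ ((x,y) ↦ T x y − T y x)`. -/
def Psi {N : ℕ} (g : Submodule ℝ (Module.End ℝ (V N))) :
    (V N →ₗ[ℝ] g) →ₗ[ℝ] (V N →ₗ[ℝ] V N →ₗ[ℝ] V N) where
  toFun T := (g.subtype ∘ₗ T) - (g.subtype ∘ₗ T).flip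
  map_add' T S := by ext x y; simp; ring
  map_smul' c T := by ext x y; simp; ring

lemma psi_apply {N : ℕ} (g : Submodule ℝ (Module.End ℝ (V N))) (T : V N →ₗ[ℝ] g)
    (x y : V N) : Psi g T x y = (T x : Module.End ℝ (V N)) y - (T y : Module.End ℝ (V N)) x :=
  rfl

lemma psi_inj {N : ℕ} (g : Submodule ℝ (Module.End ℝ (V N)))
    (hso : ∀ A ∈ g, skew A) : Function.Injective (Psi g) := by
  suffices h : ∀ T : V N →ₗ[ℝ] g, Psi g T = 0 → T = 0 by
    intro T' S' hTS
    have h0 : Psi g (T' - S') = 0 := by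
      refine LinearMap.ext fun x => LinearMap.ext fun y => ?_
      have h1 : Psi g T' x y = Psi g S' x y := by rw [hTS]
      rw [psi_apply, psi_apply] at h1
      show Psi g (T' - S') x y = 0
      rw [psi_apply]
      simp only [LinearMap.sub_apply, Submodule.coe_sub]
      rw [sub_sub_sub_comm, h1, sub_self]
    rw [← sub_eq_zero]
    exact h _ h0
  intro T hT
  have hsym : ∀ x y : V N, (T x : Module.End ℝ (V N)) y = (T y : Module.End ℝ (V N)) x := by
    intro x y
    have := congrArg (fun C => C x y) hT
    simpa [psi_apply, sub_eq_zero] using this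
  have hs : ∀ x : V N, skew ((T x : Module.End ℝ (V N))) := fun x => hso _ (T x).2
  have key : ∀ x y : V N, (T x : Module.End ℝ (V N)) y = 0 := by
    intro x y
    have h0 : ∀ z : V N, ⟪(T x : Module.End ℝ (V N)) y, z⟫ = 0 := by
      intro z
      have c : ⟪(T x : Module.End ℝ (V N)) y, z⟫ = - ⟪(T x : Module.End ℝ (V N)) y, z⟫ := by
        calc ⟪(T x : Module.End ℝ (V N)) y, z⟫
            = ⟪(T y : Module.End ℝ (V N)) x, z⟫ := by rw [hsym]
          _ = -⟪(T y : Module.End ℝ (V N)) z, x⟫ := by rw [hs y x z, real_inner_comm x]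
          _ = -⟪(T z : Module.End ℝ (V N)) y, x⟫ := by rw [hsym y z]
          _ = ⟪(T z : Module.End ℝ (V N)) x, y⟫ := by
              rw [hs z y x, neg_neg, real_inner_comm y]
          _ = ⟪(T x : Module.End ℝ (V N)) z, y⟫ := by rw [hsym z x]
          _ = -⟪(T x : Module.End ℝ (V N)) y, z⟫ := by rw [hs x z y, real_inner_comm z]
      linarith
    exact inner_self_eq_zero.mp (h0 _)
  refine LinearMap.ext fun x => ?_
  show T x = 0
  exact Subtype.ext (by rw [ZeroMemClass.coe_zero]; exact LinearMap.ext (key x))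

lemma psi_range {N : ℕ} (g : Submodule ℝ (Module.End ℝ (V N))) :
    LinearMap.range (Psi g) = gsq (g : Set (Module.End ℝ (V N))) := by
  apply le_antisymm
  · rintro _ ⟨T, rfl⟩
    classical
    set b := (EuclideanSpace.basisFun (Fin N) ℝ).toBasis with hb
    have hT : T = ∑ i, (b.coord i).smulRight (T (b i)) := by
      ext x : 1
      conv_lhs => rw [← b.sum_repr x]
      simp [Finset.smul_sum, -Module.Basis.sum_repr]
    rw [hT, map_sum]
    apply Submodule.sum_mem
    intro i _
    apply Submodule.subset_span
    refine ⟨b.coord i, (T (b i) : Module.End ℝ (V N)), (T (b i)).2, ?_⟩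
    ext x y
    simp [psi_apply, wedgeE, LinearMap.smulRight_apply]
  · rw [gsq, Submodule.span_le]
    rintro _ ⟨u, B, hB, rfl⟩
    refine ⟨u.smulRight ⟨B, hB⟩, ?_⟩
    ext x y
    simp [psi_apply, wedgeE, LinearMap.smulRight_apply]

/-- For every linear subspace `𝔤` of `𝔰𝔬(N)`, the subspace `𝔤²` has dimension `N·dim 𝔤`. -/
theorem statement5 (N : ℕ) (hN : 1 ≤ N) (g : Submodule ℝ (Module.End ℝ (V N)))
    (hso : ∀ A ∈ g, skew A) :
    Module.finrank ℝ (gsq (g : Set (Module.End ℝ (V N)))) = N * Module.finrank ℝ g := by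
  rw [← psi_range g, LinearMap.finrank_range_of_inj (psi_inj g hso),
    Module.finrank_linearMap, finrank_euclideanSpace_fin]
end
end
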